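/- Suppose (D_n) enumerates dense subsets of 2^{<ℕ} × 2^{<ℕ} and g₁, g₂ : ℕ → 2^{<ℕ} satisfy: for all n and all strings γ₁, γ₂ of length n, (γ₁⌢g₁(n), γ₂⌢g₂(n)) meets D₀,...,D_n. Define k₀ = 0, k_{m+1} = k_m + |g₁(k_m)|, assumed strictly increasing. Let x, y ∈ 2^ℕ be such that for all m, x or y restricted to [k_m, k_{m+1}) equals g₁(k_m). Let z ∈ 2^ℕ meet F_n = {τ⌢g₂(k_m) : k_m > n, |τ| = k_m} for every n. Then either (x, z) meets every D_n, or (y, z) meets every D_n. -/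
import Mathlib


/-- The initial segment `x↾n` of a real `x ∈ 2^ℕ`, as a binary string. -/
def restrictSeq (x : ℕ → Bool) (n : ℕ) : List Bool := List.ofFn (fun i : Fin n => x i)

/-- A set of strings is dense if every string has an extension in it. -/
def DenseStr (D : Set (List Bool)) : Prop := ∀ σ : List Bool, ∃ τ, σ <+: τ ∧ τ ∈ D

/-- A real meets a set of strings if some initial segment of it lies in the set. -/
def MeetsReal (x : ℕ → Bool) (A : Set (List Bool)) : Prop := ∃ n, restrictSeq x n ∈ A

/-- A real avoids a set of strings if no extension of some initial segment lies in the set. -/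
def AvoidsReal (x : ℕ → Bool) (A : Set (List Bool)) : Prop :=
  ∃ n, ∀ τ, restrictSeq x n <+: τ → τ ∉ A

/-- A set of pairs of strings is dense if every pair has a coordinatewise extension in it. -/
def DensePair (D : Set (List Bool × List Bool)) : Prop :=
  ∀ σ τ : List Bool, ∃ σ' τ', σ <+: σ' ∧ τ <+: τ' ∧ (σ', τ') ∈ D

/-- A pair of strings meets a set of pairs of strings if a pair of initial segments lies in it. -/
def MeetsPairStr (α β : List Bool) (D : Set (List Bool × List Bool)) : Prop :=
  ∃ α' β', α' <+: α ∧ β' <+: β ∧ (α', β') ∈ D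

/-- A pair of reals meets a set of pairs of strings if a pair of initial segments lies in it. -/
def MeetsPairReal (x y : ℕ → Bool) (D : Set (List Bool × List Bool)) : Prop :=
  ∃ a b, (restrictSeq x a, restrictSeq y b) ∈ D

/-- `x` agrees with the string `s` on the interval `[k, k + |s|)`. -/
def AgreesOn (x : ℕ → Bool) (k : ℕ) (s : List Bool) : Prop :=
  ∀ i, (h : i < s.length) → x (k + i) = s[i]

lemma restrict_length (x : ℕ → Bool) (n : ℕ) : (restrictSeq x n).length = n := by
  simp [restrictSeq]

lemma restrict_getElem (x : ℕ → Bool) (n i : ℕ) (h : i < (restrictSeq x n).length) :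
    (restrictSeq x n)[i] = x i := by
  simp [restrictSeq]

lemma prefix_restrict (x : ℕ → Bool) {α : List Bool} {N : ℕ}
    (h : α <+: restrictSeq x N) : α = restrictSeq x α.length := by
  have hlen : α.length ≤ N := by
    have := h.length_le; rwa [restrict_length] at this
  apply List.ext_getElem
  · rw [restrict_length]
  · intro i h1 h2
    rw [h.getElem h1, restrict_getElem, restrict_getElem]

lemma restrict_append (x : ℕ → Bool) (c : ℕ) (s : List Bool) (h : AgreesOn x c s) :
    restrictSeq x (c + s.length) = restrictSeq x c ++ s := by
  apply List.ext_getElem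
  · simp [restrict_length]
  · intro i h1 h2
    rw [restrict_getElem]
    rcases lt_or_ge i c with hi | hi
    · rw [List.getElem_append_left (by rwa [restrict_length]), restrict_getElem]
    · rw [List.getElem_append_right (by rwa [restrict_length])]
      simp only [restrict_length] at h1 ⊢
      have := h (i - c) (by omega)
      rwa [Nat.add_sub_cancel' hi] at this

/-- Conclusion of the key lemma's verification: with `g₁, g₂` as in the process lemma, `x, y`
copying the blocks `g₁(k_m)` alternately, and `z` meeting each `F_n`, either `(x, z)` meets
every `D_n` or `(y, z)` meets every `D_n`. -/
theorem stmt_17 (D : ℕ → Set (List Bool × List Bool))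
    (g₁ g₂ : ℕ → List Bool)
    (hprocess : ∀ n : ℕ, ∀ γ₁ γ₂ : List Bool, γ₁.length = n → γ₂.length = n →
      ∀ i ≤ n, MeetsPairStr (γ₁ ++ g₁ n) (γ₂ ++ g₂ n) (D i))
    (k : ℕ → ℕ) (hk0 : k 0 = 0) (hks : ∀ m, k (m + 1) = k m + (g₁ (k m)).length)
    (hkmono : StrictMono k)
    (x y : ℕ → Bool)
    (hxy : ∀ m, AgreesOn x (k m) (g₁ (k m)) ∨ AgreesOn y (k m) (g₁ (k m)))
    (z : ℕ → Bool)
    (hz : ∀ n, MeetsReal z {s | ∃ (m : ℕ) (τ : List Bool),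
      k m > n ∧ τ.length = k m ∧ s = τ ++ g₂ (k m)}) :
    (∀ n, MeetsPairReal x z (D n)) ∨ (∀ n, MeetsPairReal y z (D n)) := by
  have claim : ∀ n, (∀ i ≤ n, MeetsPairReal x z (D i)) ∨ (∀ i ≤ n, MeetsPairReal y z (D i)) := by
    intro n
    obtain ⟨a, m, τ, hm, hτlen, hza⟩ := hz n
    have hτ : τ = restrictSeq z (k m) := by
      have : τ <+: restrictSeq z a := hza ▸ List.prefix_append τ _
      rw [prefix_restrict z this, hτlen]
    have hza' : restrictSeq z a = restrictSeq z (k m) ++ g₂ (k m) := by rw [hza, hτ]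
    have key : ∀ (w : ℕ → Bool), AgreesOn w (k m) (g₁ (k m)) →
        ∀ i ≤ n, MeetsPairReal w z (D i) := by
      intro w hw i hi
      have hx : restrictSeq w (k m + (g₁ (k m)).length)
          = restrictSeq w (k m) ++ g₁ (k m) := restrict_append w _ _ hw
      obtain ⟨α', β', hα, hβ, hD⟩ :=
        hprocess (k m) (restrictSeq w (k m)) (restrictSeq z (k m))
          (restrict_length _ _) (restrict_length _ _) i (by omega)
      rw [← hx] at hα
      rw [← hza'] at hβ
      exact ⟨α'.length, β'.length, by
        rw [← prefix_restrict w hα, ← prefix_restrict z hβ]; exact hD⟩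
    rcases hxy m with h | h
    · exact Or.inl (key x h)
    · exact Or.inr (key y h)
  by_cases hx : ∀ n, MeetsPairReal x z (D n)
  · exact Or.inl hx
  · push_neg at hx
    obtain ⟨j, hj⟩ := hx
    right
    intro n
    rcases claim (max n j) with h | h
    · exact absurd (h j (le_max_right _ _)) hj
    · exact h n (le_max_left _ _)
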